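/- (Bounds on A_r/a_{r+1}.) Consider the sequences A_r, B_r, a_r defined by the accelerated recursion with parameters λ > 0 and μ ≥ 0. For every r ≥ 1: if μ > 0, then 2·(1 + μ/λ)^{−1}·(1 + √(1 + 4λ/μ))^{−1} ≤ A_r/a_{r+1} ≤ 2λ/μ; if μ = 0, then r/5 ≤ A_r/a_{r+1} ≤ r. -/

import Mathlib

set_option maxHeartbeats 2000000 in
/-- Bounds on `A_r / a_{r+1}` for the accelerated coefficients. -/
theorem stmt_15 (lam μ : ℝ) (hlam : 0 < lam) (hμ : 0 ≤ μ)
    (A a : ℕ → ℝ) (hA0 : A 0 = 0)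
    (harec : ∀ r, a (r + 1)
      = ((1 + μ * A r)
          + Real.sqrt ((1 + μ * A r) ^ 2 + 4 * lam * A r * (1 + μ * A r)))
        / (2 * lam))
    (hArec : ∀ r, A (r + 1) = A r + a (r + 1)) :
    ∀ r : ℕ, 1 ≤ r →
      (0 < μ →
        2 * (1 + μ / lam)⁻¹ * (1 + Real.sqrt (1 + 4 * lam / μ))⁻¹ ≤ A r / a (r + 1) ∧
        A r / a (r + 1) ≤ 2 * lam / μ) ∧
      (μ = 0 →
        (r : ℝ) / 5 ≤ A r / a (r + 1) ∧ A r / a (r + 1) ≤ (r : ℝ)) := by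
  -- positivity of A
  have hApos : ∀ r, 0 ≤ A r := by
    intro r
    induction r with
    | zero => simp [hA0]
    | succ n ih =>
      have hB : (0:ℝ) < 1 + μ * A n := by positivity
      have hs : 0 ≤ Real.sqrt ((1 + μ * A n) ^ 2 + 4 * lam * A n * (1 + μ * A n)) :=
        Real.sqrt_nonneg _
      have ha : 0 ≤ a (n+1) := by
        rw [harec n]; positivity
      rw [hArec n]; linarith
  have haPos : ∀ r, 0 < a (r+1) := by
    intro r
    have hB : (0:ℝ) < 1 + μ * A r := by have := hApos r; positivity
    have hs : 0 ≤ Real.sqrt ((1 + μ * A r) ^ 2 + 4 * lam * A r * (1 + μ * A r)) :=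
      Real.sqrt_nonneg _
    rw [harec r]; positivity
  -- quadratic identity
  have hquad : ∀ r, lam * a (r+1) ^ 2 = (A r + a (r+1)) * (1 + μ * A r) := by
    intro r
    have hB : (0:ℝ) < 1 + μ * A r := by have := hApos r; positivity
    have harg : (0:ℝ) ≤ (1 + μ * A r) ^ 2 + 4 * lam * A r * (1 + μ * A r) := by
      have := hApos r; positivity
    have hs : (Real.sqrt ((1 + μ * A r) ^ 2 + 4 * lam * A r * (1 + μ * A r))) ^ 2
        = (1 + μ * A r) ^ 2 + 4 * lam * A r * (1 + μ * A r) := Real.sq_sqrt harg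
    rw [harec r]
    field_simp
    nlinarith [hs, Real.sq_sqrt (mul_nonneg hB.le (by have := mul_nonneg hlam.le (hApos r); linarith) : (0:ℝ) ≤ (1 + μ * A r) * (1 + μ * A r + lam * A r * 4))]
  -- A 1 = 1/lam
  have hA1 : A 1 = 1 / lam := by
    have h := harec 0
    rw [hA0] at h
    norm_num at h
    rw [hArec 0, hA0, h]
    field_simp
    ring
  have hAge : ∀ r, 1 ≤ r → 1 / lam ≤ A r := by
    intro r hr
    induction r with
    | zero => omega
    | succ n ih =>
      rcases Nat.eq_or_lt_of_le hr with h | h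
      · rw [← h, hA1]
      · have hn : 1 ≤ n := by omega
        have := ih hn
        have := haPos n
        rw [hArec n]; linarith
  intro r hr
  have hApos_r : 0 < A r := lt_of_lt_of_le (by positivity) (hAge r hr)
  have har : 0 < a (r+1) := haPos r
  constructor
  · -- μ > 0 case
    intro hμpos
    have hq := hquad r
    have h1lam : 1 ≤ lam * A r := by
      have := hAge r hr
      rw [div_le_iff₀ hlam] at this
      linarith [this]
    constructor
    · -- lower bound
      set c : ℝ := 1 + μ / lam with hcdef
      have hc : 0 < c := by positivity
      have hclam : c * lam = lam + μ := by rw [hcdef, add_mul, one_mul, div_mul_cancel₀ _ hlam.ne']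
      set s2 : ℝ := Real.sqrt (c^2 + 4*c) with hs2def
      have hs2nn : 0 ≤ s2 := Real.sqrt_nonneg _
      have hs2sq : s2 ^ 2 = c^2 + 4*c := Real.sq_sqrt (by positivity)
      -- lam * a^2 ≤ (A+a) * (lam+μ) * A
      have h1 : lam * a (r+1) ^ 2 ≤ (A r + a (r+1)) * ((lam + μ) * A r) := by
        have hB : 1 + μ * A r ≤ (lam + μ) * A r := by nlinarith
        have hpos : 0 < A r + a (r+1) := by linarith
        nlinarith [hq]
      -- step 1 : 2 a ≤ A (c + s2)
      have hstep1 : 2 * a (r+1) ≤ A r * (c + s2) := by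
        by_contra hcon
        push_neg at hcon
        have hd : 0 < 2 * a (r+1) - A r * c - A r * s2 := by nlinarith
        have hd2 : 0 < 2 * a (r+1) - A r * c + A r * s2 := by
          have : 0 ≤ A r * s2 := by positivity
          linarith
        have hprod := mul_pos hd hd2
        have hs2sq' : (A r)^2 * s2^2 = (A r)^2 * (c^2 + 4*c) := by rw [hs2sq]
        have hd3 : A r * c * (a (r+1) + A r) < a (r+1)^2 := by nlinarith [hprod, hs2sq']
        have hd4 := mul_lt_mul_of_pos_left hd3 hlam
        have h1' : lam * a (r+1)^2 ≤ (A r + a (r+1)) * ((c * lam) * A r) := by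
          rw [hclam]; exact h1
        linarith [hd4, h1']
      -- step 2 : s2 ≤ c * sqrt(1 + 4 lam / μ)
      have hD0 : (0:ℝ) ≤ 1 + 4 * lam / μ := by positivity
      have hstep2 : s2 ≤ c * Real.sqrt (1 + 4 * lam / μ) := by
        have heq : c * Real.sqrt (1 + 4 * lam / μ) = Real.sqrt (c^2 * (1 + 4 * lam / μ)) := by
          rw [Real.sqrt_mul (sq_nonneg c), Real.sqrt_sq hc.le]
        rw [heq, hs2def]
        apply Real.sqrt_le_sqrt
        have h4 : 4 * c * μ ≤ c^2 * (4 * lam) := by nlinarith [hclam, hc.le]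
        have h5 : 4 * c ≤ c^2 * (4 * lam) / μ := (le_div_iff₀ hμpos).mpr h4
        have h6 : c^2 * (1 + 4 * lam / μ) = c^2 + c^2 * (4 * lam) / μ := by ring
        rw [h6]
        linarith [h5]
      set D : ℝ := 1 + Real.sqrt (1 + 4 * lam / μ) with hDdef
      have hD : 0 < D := by positivity
      have hchain : 2 * a (r+1) ≤ A r * (c * D) := by
        have h7 : A r * s2 ≤ A r * (c * Real.sqrt (1 + 4 * lam / μ)) :=
          mul_le_mul_of_nonneg_left hstep2 hApos_r.le
        have h8 : A r * (c + s2) ≤ A r * (c * D) := by rw [hDdef]; linarith [h7]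
        linarith [hstep1, h8]
      have heq2 : 2 * c⁻¹ * D⁻¹ = 2 / (c * D) := by
        rw [div_eq_mul_inv, mul_inv, ← mul_assoc]
      rw [heq2, div_le_div_iff₀ (mul_pos hc hD) har]
      linarith [hchain]
    · -- upper bound
      have hB : (0:ℝ) < 1 + μ * A r := by positivity
      have hsge : 1 + μ * A r
          ≤ Real.sqrt ((1 + μ * A r) ^ 2 + 4 * lam * A r * (1 + μ * A r)) := by
        have h0 : (1 + μ * A r)^2 ≤ (1 + μ * A r) ^ 2 + 4 * lam * A r * (1 + μ * A r) := by
          nlinarith [mul_nonneg (mul_nonneg (by linarith : (0:ℝ) ≤ 4 * lam) hApos_r.le) hB.le]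
        calc 1 + μ * A r = Real.sqrt ((1 + μ * A r)^2) := (Real.sqrt_sq hB.le).symm
          _ ≤ _ := Real.sqrt_le_sqrt h0
      have h2 : (1 + μ * A r) / lam ≤ a (r+1) := by
        rw [harec r, div_le_div_iff₀ hlam (by positivity : (0:ℝ) < 2 * lam)]
        have := mul_le_mul_of_nonneg_right hsge hlam.le
        ring_nf
        ring_nf at this
        linarith [this]
      have h3 : μ * A r ≤ lam * a (r+1) := by
        rw [div_le_iff₀ hlam] at h2
        linarith [h2]
      rw [div_le_div_iff₀ har hμpos]
      linarith [h3, mul_pos hlam har]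
  · -- μ = 0 case
    intro hμ0
    -- cleaned recursion
    have hclean : ∀ n, a (n+1) = (1 + Real.sqrt (1 + 4 * lam * A n)) / (2 * lam) := by
      intro n
      have h := harec n
      rw [hμ0] at h
      norm_num at h
      exact h
    -- a upper bound from A upper bound
    have haub : ∀ n : ℕ, 2 * lam * A n ≤ (n:ℝ) * ((n:ℝ)+1) → lam * a (n+1) ≤ (n:ℝ) + 1 := by
      intro n hn
      have hs : Real.sqrt (1 + 4 * lam * A n) ≤ 2*(n:ℝ)+1 := by
        have : Real.sqrt (1 + 4 * lam * A n) ≤ Real.sqrt ((2*(n:ℝ)+1)^2) := by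
          apply Real.sqrt_le_sqrt; nlinarith [hn]
        rw [Real.sqrt_sq (by positivity : (0:ℝ) ≤ 2*(n:ℝ)+1)] at this
        exact this
      rw [hclean n]
      have heq : lam * ((1 + Real.sqrt (1 + 4 * lam * A n)) / (2 * lam))
          = (1 + Real.sqrt (1 + 4 * lam * A n)) / 2 := by
        field_simp
      rw [heq]; linarith
    -- a lower bound from A lower bound
    have halb : ∀ n : ℕ, ((n:ℝ)+4)^2 ≤ 25 * (lam * A n) →
        2*(n:ℝ) + 13 ≤ 10 * (lam * a (n+1)) := by
      intro n hn
      have hAn := hApos n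
      have hs : 2*((n:ℝ)+4)/5 ≤ Real.sqrt (1 + 4 * lam * A n) := by
        have h1 : Real.sqrt ((2*((n:ℝ)+4)/5)^2) ≤ Real.sqrt (1 + 4 * lam * A n) := by
          apply Real.sqrt_le_sqrt; nlinarith [hn]
        rwa [Real.sqrt_sq (by positivity : (0:ℝ) ≤ 2*((n:ℝ)+4)/5)] at h1
      rw [hclean n]
      have heq : lam * ((1 + Real.sqrt (1 + 4 * lam * A n)) / (2 * lam))
          = (1 + Real.sqrt (1 + 4 * lam * A n)) / 2 := by
        field_simp
      rw [heq]; linarith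
    -- the A bounds by induction
    have hbounds : ∀ n : ℕ, 2 * lam * A n ≤ (n:ℝ) * ((n:ℝ)+1) ∧
        (1 ≤ n → ((n:ℝ)+4)^2 ≤ 25 * (lam * A n)) := by
      intro n
      induction n with
      | zero => constructor
                · simp [hA0]
                · omega
      | succ m ih =>
        obtain ⟨ih1, ih2⟩ := ih
        have hub := haub m ih1
        constructor
        · rw [hArec m]
          push_cast
          nlinarith [ih1, hub, hlam]
        · intro _
          rcases Nat.eq_zero_or_pos m with hm | hm
          · subst hm
            have : lam * A 1 = 1 := by rw [hA1]; field_simp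
            push_cast
            nlinarith [this]
          · have hl := ih2 hm
            have hlb := halb m hl
            rw [hArec m]
            push_cast
            nlinarith [hl, hlb]
    obtain ⟨hu, hlraw⟩ := hbounds r
    have hl := hlraw hr
    have haU := haub r hu
    have haL := halb r hl
    have hq : lam * a (r+1) ^ 2 = A r + a (r+1) := by
      have h := hquad r
      rw [hμ0] at h
      norm_num at h
      linarith [h]
    constructor
    · rw [div_le_div_iff₀ (by norm_num : (0:ℝ) < 5) har]
      nlinarith [hq, haL, har, mul_nonneg har.le (by linarith : (0:ℝ) ≤ 10 * (lam * a (r+1)) - (2*(r:ℝ)+13))]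
    · rw [div_le_iff₀ har]
      nlinarith [hq, haU, har, mul_nonneg har.le (by linarith : (0:ℝ) ≤ ((r:ℝ)+1) - lam * a (r+1))]
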